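/- Suppose y : ℝ → ℝⁿ solves the linear system ẏ = My + w and x(t) := y(t)/(y(t)ᵀBy(t)) is defined (y(t)ᵀBy(t) ≠ 0) on an interval, where B is symmetric and MᵀB + BM = -λB. Then x satisfies ẋᵢ = (mᵢᵀ + λeᵢᵀ)x + xᵀ(wᵢB - B(w⊗eᵢ) - (eᵢ⊗w)B)x, where mᵢᵀ is the i-th row of M. -/

import Mathlib

open Matrix

lemma vecMulVec_mulVec' {n : ℕ} (u v z : Fin n → ℝ) :
    (Matrix.vecMulVec u v).mulVec z = (v ⬝ᵥ z) • u := by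
  funext j
  simp [Matrix.mulVec, Matrix.vecMulVec_apply, dotProduct, Finset.mul_sum,
    mul_comm, mul_assoc, mul_left_comm]

theorem Btransform_of_linear_solves_quadratic {n : ℕ}
    (B M : Matrix (Fin n) (Fin n) ℝ) (hB : B.IsSymm) (l : ℝ)
    (hM : M.transpose * B + B * M = (-l) • B)
    (w : Fin n → ℝ) (I : Set ℝ) (hI : IsOpen I)
    (y : ℝ → Fin n → ℝ)
    (hy : ∀ t ∈ I, ∀ i, HasDerivAt (fun s => y s i) ((M.mulVec (y t) + w) i) t)
    (hq : ∀ t ∈ I, y t ⬝ᵥ B.mulVec (y t) ≠ 0)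
    (x : ℝ → Fin n → ℝ)
    (hxdef : ∀ t, x t = (y t ⬝ᵥ B.mulVec (y t))⁻¹ • y t) :
    ∀ t ∈ I, ∀ i, HasDerivAt (fun s => x s i)
      ((M i + l • (Pi.single i 1 : Fin n → ℝ)) ⬝ᵥ x t +
        x t ⬝ᵥ ((w i • B - B * Matrix.vecMulVec w (Pi.single i 1)
          - Matrix.vecMulVec (Pi.single i 1) w * B)).mulVec (x t)) t := by
  intro t ht i
  have hq0 := hq t ht
  set Y := y t with hY
  set V := M.mulVec Y + w with hV
  set a := Y ⬝ᵥ B.mulVec Y with ha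
  -- symmetry of B in dot products
  have hsymm : ∀ u v : Fin n → ℝ, u ⬝ᵥ B.mulVec v = v ⬝ᵥ B.mulVec u := by
    intro u v
    rw [Matrix.dotProduct_mulVec, ← Matrix.mulVec_transpose, hB.eq, dotProduct_comm]
  -- derivative of components of B *ᵥ y
  have hBy : ∀ j, HasDerivAt (fun s => B.mulVec (y s) j) (B.mulVec V j) t := by
    intro j
    have := HasDerivAt.fun_sum (fun k (_ : k ∈ Finset.univ) => ((hy t ht k).const_mul (B j k)))
    simpa [Matrix.mulVec, dotProduct, hV, hY] using this
  -- derivative of the quadratic form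
  have hqd : HasDerivAt (fun s => y s ⬝ᵥ B.mulVec (y s))
      (V ⬝ᵥ B.mulVec Y + Y ⬝ᵥ B.mulVec V) t := by
    have := HasDerivAt.fun_sum (fun j (_ : j ∈ Finset.univ) => ((hy t ht j).mul (hBy j)))
    simpa [dotProduct, Finset.sum_add_distrib, hV, hY] using this
  -- derivative of x i
  have hxf : (fun s => x s i) = fun s => (y s ⬝ᵥ B.mulVec (y s))⁻¹ * y s i := by
    funext s; rw [hxdef s]; simp
  have hx : HasDerivAt (fun s => x s i)
      (-(V ⬝ᵥ B.mulVec Y + Y ⬝ᵥ B.mulVec V) / a ^ 2 * Y i + a⁻¹ * V i) t := by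
    rw [hxf]
    exact (hqd.inv hq0).mul (hy t ht i)
  -- key matrix identity
  have hMB : M.mulVec Y ⬝ᵥ B.mulVec Y + Y ⬝ᵥ B.mulVec (M.mulVec Y) = -l * a := by
    have h1 : Y ⬝ᵥ (M.transpose * B + B * M).mulVec Y = Y ⬝ᵥ ((-l) • B).mulVec Y := by
      rw [hM]
    rw [Matrix.add_mulVec, dotProduct_add, ← Matrix.mulVec_mulVec,
      ← Matrix.mulVec_mulVec, Matrix.smul_mulVec, dotProduct_smul,
      smul_eq_mul, Matrix.dotProduct_mulVec (w := B.mulVec Y), Matrix.vecMul_transpose] at h1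
    exact h1
  convert hx using 1
  rw [hxdef t, ← hY, ← ha]
  simp only [Matrix.sub_mulVec, Matrix.mulVec_smul, Matrix.smul_mulVec,
    ← Matrix.mulVec_mulVec, vecMulVec_mulVec', dotProduct_smul,
    smul_dotProduct, dotProduct_sub, add_dotProduct,
    single_dotProduct, dotProduct_single, smul_eq_mul, Pi.smul_apply,
    hV, add_dotProduct, dotProduct_add, Pi.add_apply]
  have hMi : M i ⬝ᵥ Y = (M *ᵥ Y) i := rfl
  rw [Matrix.mulVec_add, dotProduct_add, hsymm w Y, ← ha, hMi]
  have hd : Y ⬝ᵥ B *ᵥ (M *ᵥ Y) = -l * a - M *ᵥ Y ⬝ᵥ B *ᵥ Y := by linarith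
  rw [hd]
  field_simp
  ring
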